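/- Let H and B be Hopf algebras over a commutative ring k with antipodes 𝒮 (on H) and s (on B), and let π : H → B and i : B → H be Hopf algebra homomorphisms with π ∘ i = id_B. Define p̃ : H → H by p̃(h) = Σ h₁ · i(s(π(h₂))). Then for every h ∈ H, p̃(h) lies in the coinvariants A = { x ∈ H : Σ x₁ ⊗ π(x₂) = x ⊗ 1_B }, and p̃ restricts to the identity on A (i.e. p̃(x) = x for x ∈ A); in particular p̃ is idempotent. -/

import Mathlib

open TensorProduct

section PtildeDef

variable {k H B : Type*} [CommRing k] [Ring H] [HopfAlgebra k H]
  [Ring B] [HopfAlgebra k B]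

/-- `p̃(h) = Σ h₁ · i(s(π(h₂)))`, where `s` is the antipode of `B`. -/
noncomputable def ptilde (π : H →ₐ[k] B) (i : B →ₐ[k] H) : H →ₗ[k] H :=
  LinearMap.mul' k H ∘ₗ
    TensorProduct.map (LinearMap.id : H →ₗ[k] H)
      (i.toLinearMap ∘ₗ HopfAlgebra.antipode (R := k) (A := B) ∘ₗ π.toLinearMap) ∘ₗ
    Coalgebra.comul (R := k) (A := H)

end PtildeDef

section Conv

variable {k : Type*} [CommRing k]
variable {C : Type*} [AddCommMonoid C] [Module k C] [Coalgebra k C]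
variable {A : Type*} [Semiring A] [Algebra k A]

/-- Convolution product on `Hom(C, A)`. -/
noncomputable def conv (f g : C →ₗ[k] A) : C →ₗ[k] A :=
  LinearMap.mul' k A ∘ₗ TensorProduct.map f g ∘ₗ Coalgebra.comul

/-- The convolution unit. -/
noncomputable def convOne : C →ₗ[k] A := Algebra.linearMap k A ∘ₗ Coalgebra.counit

lemma mul'_comp_map_mul' :
    LinearMap.mul' k A ∘ₗ (LinearMap.mul' k A).rTensor A =
      (LinearMap.mul' k A ∘ₗ (LinearMap.mul' k A).lTensor A) ∘ₗ
        (TensorProduct.assoc k A A A).toLinearMap := by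
  apply TensorProduct.ext_threefold
  intro x y z
  simp [mul_assoc]

lemma conv_assoc (f g h : C →ₗ[k] A) : conv (conv f g) h = conv f (conv g h) := by
  have h1 : TensorProduct.map (conv f g) h =
      (LinearMap.mul' k A).rTensor A ∘ₗ TensorProduct.map (TensorProduct.map f g) h ∘ₗ
        (Coalgebra.comul (R := k) (A := C)).rTensor C := by
    rw [LinearMap.rTensor, LinearMap.rTensor, ← TensorProduct.map_comp, ← TensorProduct.map_comp]
    simp [conv]
  have h2 : TensorProduct.map f (conv g h) =
      (LinearMap.mul' k A).lTensor A ∘ₗ TensorProduct.map f (TensorProduct.map g h) ∘ₗ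
        (Coalgebra.comul (R := k) (A := C)).lTensor C := by
    rw [LinearMap.lTensor, LinearMap.lTensor, ← TensorProduct.map_comp, ← TensorProduct.map_comp]
    simp [conv]
  have key : (TensorProduct.assoc k A A A).toLinearMap ∘ₗ
      TensorProduct.map (TensorProduct.map f g) h ∘ₗ
      (Coalgebra.comul (R := k) (A := C)).rTensor C ∘ₗ Coalgebra.comul =
      TensorProduct.map f (TensorProduct.map g h) ∘ₗ
      (Coalgebra.comul (R := k) (A := C)).lTensor C ∘ₗ Coalgebra.comul := by
    simp only [← LinearMap.comp_assoc]
    rw [← TensorProduct.map_map_comp_assoc_eq f g h]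
    simp only [LinearMap.comp_assoc]
    rw [Coalgebra.coassoc]
  calc conv (conv f g) h
      = LinearMap.mul' k A ∘ₗ ((LinearMap.mul' k A).rTensor A ∘ₗ
          TensorProduct.map (TensorProduct.map f g) h ∘ₗ
          (Coalgebra.comul (R := k) (A := C)).rTensor C) ∘ₗ Coalgebra.comul := by
        rw [conv, h1]
    _ = (LinearMap.mul' k A ∘ₗ (LinearMap.mul' k A).rTensor A) ∘ₗ
          TensorProduct.map (TensorProduct.map f g) h ∘ₗ
          ((Coalgebra.comul (R := k) (A := C)).rTensor C ∘ₗ Coalgebra.comul) := by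
        simp only [LinearMap.comp_assoc]
    _ = LinearMap.mul' k A ∘ₗ (LinearMap.mul' k A).lTensor A ∘ₗ
          ((TensorProduct.assoc k A A A).toLinearMap ∘ₗ
          TensorProduct.map (TensorProduct.map f g) h ∘ₗ
          (Coalgebra.comul (R := k) (A := C)).rTensor C ∘ₗ Coalgebra.comul) := by
        rw [mul'_comp_map_mul']
        simp only [LinearMap.comp_assoc]
    _ = LinearMap.mul' k A ∘ₗ (LinearMap.mul' k A).lTensor A ∘ₗ
          TensorProduct.map f (TensorProduct.map g h) ∘ₗ
          (Coalgebra.comul (R := k) (A := C)).lTensor C ∘ₗ Coalgebra.comul := by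
        rw [key]
    _ = conv f (conv g h) := by rw [conv, h2]; simp only [LinearMap.comp_assoc]

lemma conv_one (f : C →ₗ[k] A) : conv f convOne = f := by
  have : TensorProduct.map f (convOne (k := k) (C := C) (A := A)) =
      TensorProduct.map f (Algebra.linearMap k A) ∘ₗ
        (Coalgebra.counit (R := k) (A := C)).lTensor C := by
    rw [LinearMap.lTensor, ← TensorProduct.map_comp]
    simp [convOne]
  ext c
  simp only [conv, this, LinearMap.comp_apply, LinearMap.coe_comp, Function.comp_apply]
  rw [Coalgebra.lTensor_counit_comul]
  simp

lemma one_conv (f : C →ₗ[k] A) : conv convOne f = f := by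
  have : TensorProduct.map (convOne (k := k) (C := C) (A := A)) f =
      TensorProduct.map (Algebra.linearMap k A) f ∘ₗ
        (Coalgebra.counit (R := k) (A := C)).rTensor C := by
    rw [LinearMap.rTensor, ← TensorProduct.map_comp]
    simp [convOne]
  ext c
  simp only [conv, this, LinearMap.comp_apply, Function.comp_apply]
  rw [Coalgebra.rTensor_counit_comul]
  simp [Algebra.smul_def]

variable {A' : Type*} [Semiring A'] [Algebra k A']

lemma comp_conv (φ : A →ₐ[k] A') (f g : C →ₗ[k] A) :
    φ.toLinearMap ∘ₗ conv f g = conv (φ.toLinearMap ∘ₗ f) (φ.toLinearMap ∘ₗ g) := by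
  have : φ.toLinearMap ∘ₗ LinearMap.mul' k A =
      LinearMap.mul' k A' ∘ₗ TensorProduct.map φ.toLinearMap φ.toLinearMap := by
    apply TensorProduct.ext'
    intro x y
    simp
  rw [conv, conv, ← LinearMap.comp_assoc, ← LinearMap.comp_assoc, this,
    TensorProduct.map_comp]
  simp only [LinearMap.comp_assoc]

lemma comp_convOne (φ : A →ₐ[k] A') :
    φ.toLinearMap ∘ₗ (convOne (k := k) (C := C) (A := A)) = convOne := by
  ext c
  simp [convOne]

variable {D : Type*} [AddCommMonoid D] [Module k D] [Coalgebra k D]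

lemma conv_comp (ψ : D →ₗ[k] C)
    (hψ : TensorProduct.map ψ ψ ∘ₗ Coalgebra.comul (R := k) (A := D) =
      Coalgebra.comul (R := k) (A := C) ∘ₗ ψ) (f g : C →ₗ[k] A) :
    conv f g ∘ₗ ψ = conv (f ∘ₗ ψ) (g ∘ₗ ψ) := by
  rw [conv, conv, TensorProduct.map_comp]
  simp only [LinearMap.comp_assoc, hψ]

end Conv

section Hopf

open TensorProduct Coalgebra HopfAlgebra Algebra.TensorProduct

variable {k : Type*} [CommRing k] {B : Type*} [Ring B] [HopfAlgebra k B]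

lemma conv_antipode_id :
    conv (HopfAlgebra.antipode (R := k) (A := B)) LinearMap.id = convOne := by
  have : TensorProduct.map (HopfAlgebra.antipode (R := k) (A := B)) LinearMap.id =
      (HopfAlgebra.antipode (R := k) (A := B)).rTensor B := rfl
  rw [conv, this, convOne]
  exact HopfAlgebra.mul_antipode_rTensor_comul

lemma conv_id_antipode :
    conv LinearMap.id (HopfAlgebra.antipode (R := k) (A := B)) = convOne := by
  have : TensorProduct.map LinearMap.id (HopfAlgebra.antipode (R := k) (A := B)) =
      (HopfAlgebra.antipode (R := k) (A := B)).lTensor B := rfl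
  rw [conv, this, convOne]
  exact HopfAlgebra.mul_antipode_lTensor_comul

lemma antipode_one' : HopfAlgebra.antipode (R := k) (A := B) (1 : B) = 1 := by
  have := HopfAlgebra.mul_antipode_rTensor_comul_apply (R := k) (A := B) 1
  simpa [Algebra.TensorProduct.one_def] using this

variable {A : Type*} [Ring A] [Algebra k A]


-- `Δ = inclL ⋆ inclR`
lemma comul_eq_conv :
    (Coalgebra.comul (R := k) (A := B)) =
      conv (includeLeft : B →ₐ[k] B ⊗[k] B).toLinearMap
        (includeRight : B →ₐ[k] B ⊗[k] B).toLinearMap := by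
  have : LinearMap.mul' k (B ⊗[k] B) ∘ₗ
      TensorProduct.map (includeLeft : B →ₐ[k] B ⊗[k] B).toLinearMap
        (includeRight : B →ₐ[k] B ⊗[k] B).toLinearMap = LinearMap.id := by
    apply TensorProduct.ext'
    intro x y
    simp
  rw [conv, ← LinearMap.comp_assoc, this, LinearMap.id_comp]

-- `τ ∘ (S ⊗ S) ∘ Δ = (inclR ∘ S) ⋆ (inclL ∘ S)`
lemma comm_map_antipode_eq_conv :
    (TensorProduct.comm k B B).toLinearMap ∘ₗ
      TensorProduct.map (HopfAlgebra.antipode (R := k) (A := B))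
        (HopfAlgebra.antipode (R := k) (A := B)) ∘ₗ Coalgebra.comul =
    conv ((includeRight : B →ₐ[k] B ⊗[k] B).toLinearMap ∘ₗ
        HopfAlgebra.antipode (R := k) (A := B))
      ((includeLeft : B →ₐ[k] B ⊗[k] B).toLinearMap ∘ₗ
        HopfAlgebra.antipode (R := k) (A := B)) := by
  have h1 : LinearMap.mul' k (B ⊗[k] B) ∘ₗ
      TensorProduct.map (includeRight : B →ₐ[k] B ⊗[k] B).toLinearMap
        (includeLeft : B →ₐ[k] B ⊗[k] B).toLinearMap =
      (TensorProduct.comm k B B).toLinearMap := by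
    apply TensorProduct.ext'
    intro x y
    simp
  rw [conv, TensorProduct.map_comp]
  simp only [← LinearMap.comp_assoc]
  rw [h1]

/-- The antipode is an anti-coalgebra morphism. -/
lemma comul_comp_antipode :
    Coalgebra.comul (R := k) (A := B) ∘ₗ HopfAlgebra.antipode (R := k) (A := B) =
    (TensorProduct.comm k B B).toLinearMap ∘ₗ
      TensorProduct.map (HopfAlgebra.antipode (R := k) (A := B))
        (HopfAlgebra.antipode (R := k) (A := B)) ∘ₗ Coalgebra.comul := by
  set S := HopfAlgebra.antipode (R := k) (A := B)
  set iL := (includeLeft : B →ₐ[k] B ⊗[k] B)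
  set iR := (includeRight : B →ₐ[k] B ⊗[k] B)
  set G := (TensorProduct.comm k B B).toLinearMap ∘ₗ
      TensorProduct.map S S ∘ₗ (Coalgebra.comul (R := k) (A := B)) with hG
  have hΔalg : (Bialgebra.comulAlgHom k B).toLinearMap = Coalgebra.comul (R := k) (A := B) := rfl
  have hconvone_comp : ∀ (φ : B →ₐ[k] B ⊗[k] B),
      φ.toLinearMap ∘ₗ (convOne : B →ₗ[k] B) = convOne := by
    intro φ
    ext b
    simp [convOne, Algebra.algebraMap_eq_smul_one, map_smul]
  -- Δ ⋆ (Δ ∘ S) = 1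
  have h1 : conv (Coalgebra.comul (R := k) (A := B)) (Coalgebra.comul (R := k) (A := B) ∘ₗ S) =
      convOne := by
    have := comp_conv (Bialgebra.comulAlgHom k B) LinearMap.id S
    rw [conv_id_antipode, hconvone_comp (Bialgebra.comulAlgHom k B), LinearMap.comp_id,
      hΔalg] at this
    exact this.symm
  -- (iL ∘ S) ⋆ iL = 1  and (iR ∘ S) ⋆ iR = 1
  have h2 : ∀ (φ : B →ₐ[k] B ⊗[k] B),
      conv (φ.toLinearMap ∘ₗ S) φ.toLinearMap = convOne := by
    intro φ
    have := comp_conv φ S LinearMap.id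
    rw [conv_antipode_id, hconvone_comp φ, LinearMap.comp_id] at this
    exact this.symm
  -- G ⋆ Δ = 1
  have h3 : conv G (Coalgebra.comul (R := k) (A := B)) = convOne := by
    rw [hG, comm_map_antipode_eq_conv, comul_eq_conv]
    rw [conv_assoc, ← conv_assoc (iL.toLinearMap ∘ₗ S), h2 iL, one_conv, h2 iR]
  -- uniqueness of convolution inverse
  calc Coalgebra.comul (R := k) (A := B) ∘ₗ S
      = conv convOne (Coalgebra.comul (R := k) (A := B) ∘ₗ S) := (one_conv _).symm
    _ = conv (conv G (Coalgebra.comul (R := k) (A := B)))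
        (Coalgebra.comul (R := k) (A := B) ∘ₗ S) := by rw [h3]
    _ = conv G (conv (Coalgebra.comul (R := k) (A := B))
        (Coalgebra.comul (R := k) (A := B) ∘ₗ S)) := conv_assoc _ _ _
    _ = conv G convOne := by rw [h1]
    _ = G := conv_one _

end Hopf

variable {k H B : Type*} [CommRing k] [Ring H] [HopfAlgebra k H]
  [Ring B] [HopfAlgebra k B]

/-- `p̃(h) = Σ h₁ i(s(π(h₂)))` lands in the coinvariants
`A = {x : Σ x₁ ⊗ π(x₂) = x ⊗ 1}`, restricts to the identity on `A`, and is idempotent. -/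
theorem ptilde_coinvariant_retraction (π : H →ₐ[k] B) (i : B →ₐ[k] H)
    (hπΔ : TensorProduct.map π.toLinearMap π.toLinearMap ∘ₗ
        Coalgebra.comul (R := k) (A := H) =
      Coalgebra.comul (R := k) (A := B) ∘ₗ π.toLinearMap)
    (hπε : Coalgebra.counit (R := k) (A := B) ∘ₗ π.toLinearMap =
      Coalgebra.counit (R := k) (A := H))
    (hiΔ : TensorProduct.map i.toLinearMap i.toLinearMap ∘ₗ
        Coalgebra.comul (R := k) (A := B) =
      Coalgebra.comul (R := k) (A := H) ∘ₗ i.toLinearMap)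
    (hiε : Coalgebra.counit (R := k) (A := H) ∘ₗ i.toLinearMap =
      Coalgebra.counit (R := k) (A := B))
    (hπi : ∀ b : B, π (i b) = b) :
    (∀ h : H,
      TensorProduct.map (LinearMap.id : H →ₗ[k] H) π.toLinearMap
          (Coalgebra.comul (R := k) (ptilde π i h)) = ptilde π i h ⊗ₜ[k] (1 : B)) ∧
    (∀ x : H,
      TensorProduct.map (LinearMap.id : H →ₗ[k] H) π.toLinearMap
          (Coalgebra.comul (R := k) x) = x ⊗ₜ[k] (1 : B) →
      ptilde π i x = x) ∧
    (∀ h : H, ptilde π i (ptilde π i h) = ptilde π i h) := by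
  set S : B →ₗ[k] B := HopfAlgebra.antipode (R := k) (A := B) with hS
  set j : H →ₗ[k] H := i.toLinearMap ∘ₗ S ∘ₗ π.toLinearMap with hj
  have hπlin : π.toLinearMap ∘ₗ i.toLinearMap = LinearMap.id := LinearMap.ext hπi
  have hptilde : ptilde π i = conv LinearMap.id j := rfl
  set ρ : H →ₐ[k] H ⊗[k] B := Algebra.TensorProduct.includeLeft with hρ
  set ιR : B →ₐ[k] H ⊗[k] B := Algebra.TensorProduct.includeRight with hιR
  set Φ : H →ₗ[k] H ⊗[k] B :=
    TensorProduct.map (LinearMap.id : H →ₗ[k] H) π.toLinearMap ∘ₗ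
      Coalgebra.comul (R := k) (A := H) with hΦ
  set κ : H →ₗ[k] H ⊗[k] B := ιR.toLinearMap ∘ₗ π.toLinearMap with hκ
  -- Part 2: p̃ restricted to coinvariants is the identity
  have part2 : ∀ x : H,
      TensorProduct.map (LinearMap.id : H →ₗ[k] H) π.toLinearMap
          (Coalgebra.comul (R := k) x) = x ⊗ₜ[k] (1 : B) →
      ptilde π i x = x := by
    intro x hx
    have hmaps : TensorProduct.map (LinearMap.id : H →ₗ[k] H) j =
        TensorProduct.map (LinearMap.id : H →ₗ[k] H) (i.toLinearMap ∘ₗ S) ∘ₗ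
          TensorProduct.map (LinearMap.id : H →ₗ[k] H) π.toLinearMap := by
      rw [← TensorProduct.map_comp, LinearMap.comp_id, hj, LinearMap.comp_assoc]
    have : ptilde π i x = LinearMap.mul' k H
        (TensorProduct.map (LinearMap.id : H →ₗ[k] H) j
          (Coalgebra.comul (R := k) x)) := rfl
    rw [this, hmaps, LinearMap.comp_apply, hx]
    simp [hS, antipode_one']
  -- Part 1
  have ΦA : H →ₐ[k] H ⊗[k] B :=
    (Algebra.TensorProduct.map (AlgHom.id k H) π).comp (Bialgebra.comulAlgHom k H)
  have hΦA : ((Algebra.TensorProduct.map (AlgHom.id k H) π).comp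
      (Bialgebra.comulAlgHom k H)).toLinearMap = Φ := rfl
  -- claim A : Φ = ρ ⋆ κ
  have claimA : Φ = conv ρ.toLinearMap κ := by
    have hmul : LinearMap.mul' k (H ⊗[k] B) ∘ₗ
        TensorProduct.map ρ.toLinearMap ιR.toLinearMap = LinearMap.id := by
      apply TensorProduct.ext'
      intro x y
      simp [hρ, hιR]
    have : TensorProduct.map ρ.toLinearMap κ =
        TensorProduct.map ρ.toLinearMap ιR.toLinearMap ∘ₗ
          TensorProduct.map (LinearMap.id : H →ₗ[k] H) π.toLinearMap := by
      rw [← TensorProduct.map_comp, LinearMap.comp_id, hκ]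
    rw [conv, this, ← LinearMap.comp_assoc, ← LinearMap.comp_assoc, hmul, LinearMap.id_comp, hΦ]
  -- Gmap = (ιR ∘ S) ⋆ (ρ ∘ i ∘ S) in Hom(B, H ⊗ B)
  set Gmap : B →ₗ[k] H ⊗[k] B :=
    TensorProduct.map i.toLinearMap (LinearMap.id : B →ₗ[k] B) ∘ₗ
      (TensorProduct.comm k B B).toLinearMap ∘ₗ TensorProduct.map S S ∘ₗ
        Coalgebra.comul (R := k) (A := B) with hGmap
  have Gdef : Gmap = conv (ιR.toLinearMap ∘ₗ S) ((ρ.toLinearMap ∘ₗ i.toLinearMap) ∘ₗ S) := by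
    have hmul : LinearMap.mul' k (H ⊗[k] B) ∘ₗ
        TensorProduct.map ιR.toLinearMap (ρ.toLinearMap ∘ₗ i.toLinearMap) =
        TensorProduct.map i.toLinearMap (LinearMap.id : B →ₗ[k] B) ∘ₗ
          (TensorProduct.comm k B B).toLinearMap := by
      apply TensorProduct.ext'
      intro x y
      simp [hρ, hιR]
    rw [conv, TensorProduct.map_comp]
    simp only [← LinearMap.comp_assoc]
    rw [hmul]
    simp only [LinearMap.comp_assoc, hGmap]
  -- Φ ∘ j factors through π via Gmap
  have hΦj : Φ ∘ₗ j = Gmap ∘ₗ π.toLinearMap := by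
    have e1 : Coalgebra.comul (R := k) (A := H) ∘ₗ i.toLinearMap =
        TensorProduct.map i.toLinearMap i.toLinearMap ∘ₗ
          Coalgebra.comul (R := k) (A := B) := hiΔ.symm
    have e2 : TensorProduct.map (LinearMap.id : H →ₗ[k] H) π.toLinearMap ∘ₗ
        TensorProduct.map i.toLinearMap i.toLinearMap =
        TensorProduct.map i.toLinearMap (LinearMap.id : B →ₗ[k] B) := by
      rw [← TensorProduct.map_comp, LinearMap.id_comp, hπlin]
    calc Φ ∘ₗ j
        = TensorProduct.map (LinearMap.id : H →ₗ[k] H) π.toLinearMap ∘ₗ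
            (Coalgebra.comul (R := k) (A := H) ∘ₗ i.toLinearMap) ∘ₗ S ∘ₗ π.toLinearMap := by
          rw [hΦ, hj]; simp only [LinearMap.comp_assoc]
      _ = (TensorProduct.map (LinearMap.id : H →ₗ[k] H) π.toLinearMap ∘ₗ
            TensorProduct.map i.toLinearMap i.toLinearMap) ∘ₗ
            (Coalgebra.comul (R := k) (A := B) ∘ₗ S) ∘ₗ π.toLinearMap := by
          rw [e1]; simp only [LinearMap.comp_assoc]
      _ = TensorProduct.map i.toLinearMap (LinearMap.id : B →ₗ[k] B) ∘ₗ
            ((TensorProduct.comm k B B).toLinearMap ∘ₗ TensorProduct.map S S ∘ₗ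
              Coalgebra.comul (R := k) (A := B)) ∘ₗ π.toLinearMap := by
          rw [e2, hS, comul_comp_antipode]
      _ = Gmap ∘ₗ π.toLinearMap := by rw [hGmap]; simp only [LinearMap.comp_assoc]
  -- claim C : ιR ⋆ Gmap = ρ ∘ i ∘ S
  have claimC : conv ιR.toLinearMap Gmap = (ρ.toLinearMap ∘ₗ i.toLinearMap) ∘ₗ S := by
    have h2 : conv ιR.toLinearMap (ιR.toLinearMap ∘ₗ S) = convOne := by
      have := comp_conv ιR LinearMap.id S
      rw [conv_id_antipode, comp_convOne ιR, LinearMap.comp_id] at this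
      exact this.symm
    rw [Gdef, ← conv_assoc, h2, one_conv]
  -- claim B : κ ⋆ (Φ ∘ j) = ρ ∘ j
  have claimB : conv κ (Φ ∘ₗ j) = ρ.toLinearMap ∘ₗ j := by
    rw [hκ, hΦj, ← conv_comp π.toLinearMap hπΔ, claimC, hj]
    simp only [LinearMap.comp_assoc]
  have key1 : Φ ∘ₗ ptilde π i = ρ.toLinearMap ∘ₗ ptilde π i := by
    rw [hptilde, ← hΦA, comp_conv, hΦA, LinearMap.comp_id,
      comp_conv ρ, LinearMap.comp_id, ← claimB, ← conv_assoc, ← claimA]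
  have part1 : ∀ h : H,
      TensorProduct.map (LinearMap.id : H →ₗ[k] H) π.toLinearMap
          (Coalgebra.comul (R := k) (ptilde π i h)) = ptilde π i h ⊗ₜ[k] (1 : B) := by
    intro h
    have := LinearMap.congr_fun key1 h
    simpa [hΦ, hρ] using this
  exact ⟨part1, part2, fun h => part2 _ (part1 h)⟩
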